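/- Let n ≥ 1 and q ≥ 1 be integers and t ∈ ZMod q. Then, as an identity of integers, q · n · L_q(n,t) = ∑ gcd(d,q) · μ(d) · q^(n/d), the sum taken over all positive divisors d of n such that gcd(d,q) divides the canonical representative of t in {0,1,…,q−1}, where μ is the Möbius function. -/

import Mathlib

/-- The cyclic rotation `rot w i = w (i + 1 mod n)`. -/
def rot {n : ℕ} {α : Type*} (w : Fin n → α) : Fin n → α :=
  fun i => w ⟨((i : ℕ) + 1) % n, Nat.mod_lt _ i.pos⟩

/-- The orbit (necklace) of a word under cyclic rotation. -/
def necklace {n : ℕ} {α : Type*} (v : Fin n → α) : Set (Fin n → α) :=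
  {w | ∃ k : ℕ, rot^[k] v = w}

/-- The number of orbits of cardinality exactly `d` of the cyclic rotation action on
`A(n,q,t) = {v : Fin n → ZMod q | ∑ i, v i = t}`. -/
noncomputable def necklaceCount (n q : ℕ) (t : ZMod q) (d : ℕ) : ℕ :=
  Set.ncard {O : Set (Fin n → ZMod q) |
    (∃ v : Fin n → ZMod q, (∑ i, v i = t) ∧ O = necklace v) ∧ O.ncard = d}

/-- The number `L_q(n,t)` of Lyndon words of length `n` and trace `t`, i.e. the number
of orbits of cardinality exactly `n` of the cyclic rotation action on `A(n,q,t)`. -/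
noncomputable def lyndonCount (q n : ℕ) (t : ZMod q) : ℕ := necklaceCount n q t n

lemma rot_iterate {n : ℕ} {α : Type*} (v : Fin n → α) (k : ℕ) (i : Fin n) :
    (rot^[k] v) i = v ⟨((i : ℕ) + k) % n, Nat.mod_lt _ i.pos⟩ := by
  induction k generalizing i with
  | zero =>
    rw [Function.iterate_zero_apply]
    congr 1
    exact Fin.ext (show (i:ℕ) = ((i:ℕ)+0) % n by simp [Nat.mod_eq_of_lt i.isLt])
  | succ k ih =>
    rw [Function.iterate_succ_apply']
    simp only [rot]
    rw [ih]
    congr 1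
    apply Fin.ext
    show ((((i:ℕ)+1) % n) + k) % n = ((i:ℕ) + (k+1)) % n
    rw [Nat.mod_add_mod, Nat.add_assoc, Nat.add_comm 1 k]

lemma rot_iterate_n {n : ℕ} {α : Type*} (v : Fin n → α) : rot^[n] v = v := by
  funext i
  rw [rot_iterate]
  congr 1
  apply Fin.ext
  simp [Nat.add_mod_right, Nat.mod_eq_of_lt i.isLt]

lemma rot_iterate_mod {n : ℕ} {α : Type*} (hn : 0 < n) (v : Fin n → α) (k : ℕ) :
    rot^[k] v = rot^[k % n] v := by
  conv_lhs => rw [← Nat.mod_add_div k n, Function.iterate_add_apply]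
  congr 1
  induction (k / n) with
  | zero => rfl
  | succ m ih => rw [Nat.mul_succ, Function.iterate_add_apply, rot_iterate_n, ih]

section orbit
variable {n : ℕ} {α : Type*}

lemma rot_injective (hn : 0 < n) : Function.Injective (rot : (Fin n → α) → _) := by
  intro v w h
  have hv : ∀ u : Fin n → α, rot^[n-1] (rot u) = u := by
    intro u
    rw [← Function.iterate_succ_apply, Nat.succ_eq_add_one, Nat.sub_add_cancel hn,
      rot_iterate_n]
  rw [← hv v, ← hv w, h]

lemma rot_iter_injective (hn : 0 < n) (k : ℕ) :
    Function.Injective ((rot : (Fin n → α) → _)^[k]) :=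
  Function.Injective.iterate (rot_injective hn) k

lemma isPeriodicPt_rot (v : Fin n → α) : Function.IsPeriodicPt rot n v := rot_iterate_n v

lemma per_dvd (hn : 0 < n) (v : Fin n → α) : Function.minimalPeriod rot v ∣ n :=
  (isPeriodicPt_rot v).minimalPeriod_dvd

lemma per_pos (hn : 0 < n) (v : Fin n → α) : 0 < Function.minimalPeriod rot v :=
  Function.IsPeriodicPt.minimalPeriod_pos hn (isPeriodicPt_rot v)

lemma rot_iter_eq_iff_per_dvd (v : Fin n → α) (k : ℕ) :
    rot^[k] v = v ↔ Function.minimalPeriod rot v ∣ k :=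
  Function.isPeriodicPt_iff_minimalPeriod_dvd

lemma rot_iterate_mod_per (v : Fin n → α) (k : ℕ)
    (hp : 0 < Function.minimalPeriod rot v) :
    rot^[k] v = rot^[k % Function.minimalPeriod rot v] v := by
  set p := Function.minimalPeriod rot v
  conv_lhs => rw [← Nat.mod_add_div k p, Function.iterate_add_apply]
  congr 1
  induction (k / p) with
  | zero => rfl
  | succ m ih =>
    rw [Nat.mul_succ, Function.iterate_add_apply, Function.isPeriodicPt_minimalPeriod, ih]

variable [DecidableEq α]

/-- The orbit as a finset. -/
def orbF (v : Fin n → α) : Finset (Fin n → α) :=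
  (Finset.range n).image (fun k => rot^[k] v)

lemma mem_orbF (hn : 0 < n) {v w : Fin n → α} :
    w ∈ orbF v ↔ ∃ k : ℕ, rot^[k] v = w := by
  constructor
  · rintro h
    obtain ⟨k, -, rfl⟩ := Finset.mem_image.mp h
    exact ⟨k, rfl⟩
  · rintro ⟨k, rfl⟩
    exact Finset.mem_image.mpr ⟨k % n, Finset.mem_range.mpr (Nat.mod_lt _ hn),
      (rot_iterate_mod hn v k).symm⟩

lemma necklace_eq_orbF (hn : 0 < n) (v : Fin n → α) : necklace v = ↑(orbF v) := by
  ext w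
  simp [necklace, mem_orbF hn]

lemma self_mem_orbF (hn : 0 < n) (v : Fin n → α) : v ∈ orbF v :=
  (mem_orbF hn).mpr ⟨0, rfl⟩

lemma orbF_eq_of_mem (hn : 0 < n) {v w : Fin n → α} (hw : w ∈ orbF v) :
    orbF w = orbF v := by
  obtain ⟨k, rfl⟩ := (mem_orbF hn).mp hw
  have hvw : ∃ j, rot^[j] (rot^[k] v) = v := by
    refine ⟨n - k % n, ?_⟩
    rw [rot_iterate_mod hn v k, ← Function.iterate_add_apply,
      Nat.sub_add_cancel (le_of_lt (Nat.mod_lt _ hn)), rot_iterate_n]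
  ext w
  rw [mem_orbF hn, mem_orbF hn]
  constructor
  · rintro ⟨j, rfl⟩
    exact ⟨j + k, by rw [Function.iterate_add_apply]⟩
  · rintro ⟨j, rfl⟩
    obtain ⟨m, hm⟩ := hvw
    exact ⟨j + m, by rw [Function.iterate_add_apply, hm]⟩

lemma per_rot_iter (hn : 0 < n) (v : Fin n → α) (k : ℕ) :
    Function.minimalPeriod rot (rot^[k] v) = Function.minimalPeriod rot v := by
  have key : ∀ (u : Fin n → α) (j m : ℕ), rot^[j] u = u → rot^[j] (rot^[m] u) = rot^[m] u := by
    intro u j m h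
    rw [← Function.iterate_add_apply, Nat.add_comm, Function.iterate_add_apply, h]
  apply Nat.dvd_antisymm
  · -- per (rot^[k] v) ∣ per v
    apply Function.IsPeriodicPt.minimalPeriod_dvd
    exact key v _ k (Function.isPeriodicPt_minimalPeriod rot v)
  · apply Function.IsPeriodicPt.minimalPeriod_dvd
    have h1 : rot^[Function.minimalPeriod rot (rot^[k] v)] (rot^[k] v) = rot^[k] v :=
      Function.isPeriodicPt_minimalPeriod rot (rot^[k] v)
    have h3 : rot^[k] (rot^[Function.minimalPeriod rot (rot^[k] v)] v) = rot^[k] v := by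
      rw [← Function.iterate_add_apply, Nat.add_comm, Function.iterate_add_apply]
      exact h1
    exact rot_iter_injective hn k h3

lemma card_orbF (hn : 0 < n) (v : Fin n → α) :
    (orbF v).card = Function.minimalPeriod rot v := by
  set p := Function.minimalPeriod rot v with hp
  have hppos : 0 < p := per_pos hn v
  have hple : p ≤ n := Nat.le_of_dvd hn (per_dvd hn v)
  have himg : orbF v = (Finset.range p).image (fun k => rot^[k] v) := by
    apply Finset.Subset.antisymm
    · intro w hw
      obtain ⟨k, rfl⟩ := (mem_orbF hn).mp hw
      exact Finset.mem_image.mpr ⟨k % p, Finset.mem_range.mpr (Nat.mod_lt _ hppos),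
        (rot_iterate_mod_per v k hppos).symm⟩
    · intro w hw
      obtain ⟨k, hk, rfl⟩ := Finset.mem_image.mp hw
      exact (mem_orbF hn).mpr ⟨k, rfl⟩
  rw [himg, Finset.card_image_of_injOn, Finset.card_range]
  intro a ha b hb hab
  simp only [Finset.coe_range, Set.mem_Iio] at ha hb
  have key2 : ∀ a b : ℕ, a ≤ b → b < p → rot^[a] v = rot^[b] v → a = b := by
    intro a b hab' hb h
    by_contra hne
    have hlt : 0 < b - a := by omega
    have h2 : rot^[b - a] v = v := by
      apply rot_iter_injective hn a
      rw [← Function.iterate_add_apply]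
      have heq : a + (b - a) = b := by omega
      rw [heq]
      exact h.symm
    have hd := Function.IsPeriodicPt.minimalPeriod_dvd h2
    rw [← hp] at hd
    have := Nat.le_of_dvd hlt hd
    omega
  rcases le_total a b with h' | h'
  · exact key2 a b h' hb hab
  · exact (key2 b a h' ha hab.symm).symm

end orbit

section trace
open scoped Classical
variable {n q : ℕ} [NeZero q]

def traceSet (n q : ℕ) [NeZero q] (t : ZMod q) : Finset (Fin n → ZMod q) :=
  Finset.univ.filter (fun v => ∑ i, v i = t)

lemma sum_rot (hn : 0 < n) (v : Fin n → ZMod q) : ∑ i, rot v i = ∑ i, v i := by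
  haveI : NeZero n := ⟨by omega⟩
  have key : ∀ i : Fin n, rot v i = v (i + 1) := by
    intro i
    unfold rot
    congr 1
    apply Fin.ext
    rw [Fin.add_def]
    show ((i : ℕ) + 1) % n = ((i : ℕ) + (1 : Fin n).val) % n
    rw [Fin.val_one', Nat.add_mod_mod]
  simp only [key]
  exact Fintype.sum_equiv (Equiv.addRight (1 : Fin n)) _ _ (fun i => rfl)

lemma sum_rot_iter (hn : 0 < n) (v : Fin n → ZMod q) (k : ℕ) :
    ∑ i, (rot^[k] v) i = ∑ i, v i := by
  induction k with
  | zero => rfl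
  | succ k ih => rw [Function.iterate_succ_apply', sum_rot hn, ih]

lemma rot_iter_mem_traceSet (hn : 0 < n) {t : ZMod q} {v : Fin n → ZMod q}
    (hv : v ∈ traceSet n q t) (k : ℕ) : rot^[k] v ∈ traceSet n q t := by
  simp only [traceSet, Finset.mem_filter, Finset.mem_univ, true_and] at hv ⊢
  rw [sum_rot_iter hn, hv]

/-- words of trace t and minimal period d -/
noncomputable def perSet (n q : ℕ) [NeZero q] (t : ZMod q) (d : ℕ) : Finset (Fin n → ZMod q) :=
  (traceSet n q t).filter (fun v => Function.minimalPeriod rot v = d)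

lemma orbF_subset_perSet (hn : 0 < n) {t : ZMod q} {d : ℕ} {v : Fin n → ZMod q}
    (hv : v ∈ perSet n q t d) : orbF v ⊆ perSet n q t d := by
  intro w hw
  obtain ⟨k, rfl⟩ := (mem_orbF hn).mp hw
  simp only [perSet, Finset.mem_filter] at hv ⊢
  exact ⟨rot_iter_mem_traceSet hn hv.1 k, by rw [per_rot_iter hn, hv.2]⟩

/-- the finset of orbits of aperiodic trace-t words -/
noncomputable def orbs (n q : ℕ) [NeZero q] (t : ZMod q) : Finset (Finset (Fin n → ZMod q)) :=
  (perSet n q t n).image orbF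

lemma perSet_eq_biUnion (hn : 0 < n) (t : ZMod q) :
    perSet n q t n = (orbs n q t).biUnion id := by
  apply Finset.Subset.antisymm
  · intro v hv
    exact Finset.mem_biUnion.mpr ⟨orbF v, Finset.mem_image_of_mem _ hv, self_mem_orbF hn v⟩
  · intro w hw
    obtain ⟨O, hO, hwO⟩ := Finset.mem_biUnion.mp hw
    obtain ⟨v, hv, rfl⟩ := Finset.mem_image.mp hO
    exact orbF_subset_perSet hn hv hwO

lemma card_perSet_top (hn : 0 < n) (t : ZMod q) :
    (perSet n q t n).card = (orbs n q t).card * n := by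
  rw [perSet_eq_biUnion hn t, Finset.card_biUnion]
  · rw [Finset.sum_congr rfl (fun O hO => ?_), Finset.sum_const, smul_eq_mul]
    obtain ⟨v, hv, rfl⟩ := Finset.mem_image.mp hO
    show (orbF v).card = n
    rw [card_orbF hn]
    exact (Finset.mem_filter.mp hv).2
  · intro O1 h1 O2 h2 hne
    show Disjoint O1 O2
    rw [Finset.disjoint_left]
    intro x hx1 hx2
    obtain ⟨v1, hv1, rfl⟩ := Finset.mem_image.mp h1
    obtain ⟨v2, hv2, rfl⟩ := Finset.mem_image.mp h2
    exact hne (by rw [← orbF_eq_of_mem hn hx1, ← orbF_eq_of_mem hn hx2])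

end trace

section bridge
open scoped Classical
variable {n q : ℕ} [NeZero q]

lemma mem_traceSet_iff {t : ZMod q} {v : Fin n → ZMod q} :
    v ∈ traceSet n q t ↔ ∑ i, v i = t := by
  simp [traceSet]

lemma lyndonCount_eq (hn : 0 < n) (t : ZMod q) :
    lyndonCount q n t = (orbs n q t).card := by
  have hset : {O : Set (Fin n → ZMod q) |
      (∃ v : Fin n → ZMod q, (∑ i, v i = t) ∧ O = necklace v) ∧ O.ncard = n} =
      (fun F : Finset (Fin n → ZMod q) => (↑F : Set (Fin n → ZMod q))) '' ↑(orbs n q t) := by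
    ext O
    constructor
    · rintro ⟨⟨v, hv, rfl⟩, hcard⟩
      rw [necklace_eq_orbF hn, Set.ncard_coe_finset, card_orbF hn] at hcard
      refine ⟨orbF v, ?_, (necklace_eq_orbF hn v).symm ▸ rfl⟩
      simp only [orbs, Finset.coe_image, Set.mem_image, Finset.mem_coe]
      exact ⟨v, Finset.mem_filter.mpr ⟨mem_traceSet_iff.mpr hv, hcard⟩, rfl⟩
    · rintro ⟨F, hF, rfl⟩
      simp only [orbs, Finset.coe_image, Set.mem_image, Finset.mem_coe] at hF
      obtain ⟨v, hv, rfl⟩ := hF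
      have hv' := Finset.mem_filter.mp hv
      refine ⟨⟨v, mem_traceSet_iff.mp hv'.1, (necklace_eq_orbF hn v).symm⟩, ?_⟩
      rw [Set.ncard_coe_finset, card_orbF hn, hv'.2]
  show necklaceCount n q t n = _
  rw [necklaceCount, hset, Set.ncard_image_of_injective _ Finset.coe_injective,
    Set.ncard_coe_finset]

end bridge

section fixed
open scoped Classical
variable {n q : ℕ} [NeZero q]

noncomputable def fixSet (n q : ℕ) [NeZero q] (t : ZMod q) (e : ℕ) : Finset (Fin n → ZMod q) :=
  (traceSet n q t).filter (fun v => rot^[e] v = v)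

lemma card_fixSet_eq_sum (t : ZMod q) {e : ℕ} (hepos : 0 < e) :
    (fixSet n q t e).card = ∑ d ∈ e.divisors, (perSet n q t d).card := by
  rw [Finset.card_eq_sum_card_fiberwise (f := fun v => Function.minimalPeriod rot v)
    (t := e.divisors) ?_]
  · apply Finset.sum_congr rfl
    intro d hd
    congr 1
    unfold fixSet perSet
    rw [Finset.filter_filter]
    apply Finset.filter_congr
    intro v _
    constructor
    · rintro ⟨-, h2⟩; exact h2
    · intro h2
      exact ⟨(rot_iter_eq_iff_per_dvd v e).mpr (h2 ▸ Nat.dvd_of_mem_divisors hd), h2⟩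
  · intro v hv
    have := (rot_iter_eq_iff_per_dvd v e).mp (Finset.mem_filter.mp hv).2
    exact Nat.mem_divisors.mpr ⟨this, by omega⟩

/-- the expansion of a word of length `e` to a word of length `n` (periodic repetition) -/
def expand (n : ℕ) {e : ℕ} (hepos : 0 < e) (u : Fin e → ZMod q) : Fin n → ZMod q :=
  fun i => u ⟨(i : ℕ) % e, Nat.mod_lt _ hepos⟩

lemma sum_expand (hn : 0 < n) {e : ℕ} (hepos : 0 < e) (he : e ∣ n) (u : Fin e → ZMod q) :
    ∑ i, expand n hepos u i = (n / e) • ∑ j, u j := by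
  have hme : n = (n / e) * e := (Nat.div_mul_cancel he).symm
  have aux : ∀ m : ℕ, ∑ i ∈ Finset.range (m * e),
      (fun i : ℕ => u ⟨i % e, Nat.mod_lt _ hepos⟩) i = m • ∑ j, u j := by
    intro m
    induction m with
    | zero => simp
    | succ m ih =>
      have : (m + 1) * e = m * e + e := by ring
      rw [this, Finset.sum_range_add, ih]
      have h2 : ∀ x ∈ Finset.range e,
          (fun i : ℕ => u ⟨i % e, Nat.mod_lt _ hepos⟩) (m * e + x) =
          (fun i : ℕ => u ⟨i % e, Nat.mod_lt _ hepos⟩) x := by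
        intro x _
        simp only []
        congr 1
        exact Fin.ext (show (m * e + x) % e = x % e by
          rw [Nat.add_comm, Nat.add_mul_mod_self_right])
      rw [Finset.sum_congr rfl h2, ← Fin.sum_univ_eq_sum_range]
      have h3 : ∀ j : Fin e, u ⟨(j : ℕ) % e, Nat.mod_lt _ hepos⟩ = u j := by
        intro j
        congr 1
        exact Fin.ext (Nat.mod_eq_of_lt j.isLt)
      rw [Fintype.sum_congr _ _ h3, succ_nsmul]
  have := aux (n / e)
  rw [← hme] at this
  rw [← this]
  exact Fin.sum_univ_eq_sum_range (fun i : ℕ => u ⟨i % e, Nat.mod_lt _ hepos⟩) n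

lemma expand_fixed (hn : 0 < n) {e : ℕ} (hepos : 0 < e) (he : e ∣ n) (u : Fin e → ZMod q) :
    rot^[e] (expand n hepos u) = expand n hepos u := by
  funext i
  rw [rot_iterate]
  unfold expand
  congr 1
  apply Fin.ext
  show ((i : ℕ) + e) % n % e = (i : ℕ) % e
  rw [Nat.mod_mod_of_dvd _ he, Nat.add_mod_right]

lemma fixed_eq_expand (hn : 0 < n) {e : ℕ} (hepos : 0 < e) (he : e ∣ n)
    {v : Fin n → ZMod q} (hv : rot^[e] v = v) (i : Fin n) :
    v i = v ⟨(i : ℕ) % e, lt_of_lt_of_le (Nat.mod_lt _ hepos) (Nat.le_of_dvd hn he)⟩ := by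
  have step : ∀ x : ℕ, ∀ hx : x < n, v ⟨(x + e) % n, Nat.mod_lt _ hn⟩ = v ⟨x, hx⟩ := by
    intro x hx
    conv_rhs => rw [← hv]
    rw [rot_iterate]
  have main : ∀ k x : ℕ, ∀ hx : x < n, v ⟨(x + k * e) % n, Nat.mod_lt _ hn⟩ = v ⟨x, hx⟩ := by
    intro k
    induction k with
    | zero => intro x hx; congr 1; exact Fin.ext (by simp [Nat.mod_eq_of_lt hx])
    | succ k ih =>
      intro x hx
      have h1 : (x + (k+1) * e) % n = (((x + e) % n) + k * e) % n := by
        rw [Nat.mod_add_mod]; ring_nf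
      have h2 : v ⟨(x + (k+1) * e) % n, Nat.mod_lt _ hn⟩ =
          v ⟨(((x + e) % n) + k * e) % n, Nat.mod_lt _ hn⟩ := by
        congr 1
        exact Fin.ext h1
      rw [h2, ih _ (Nat.mod_lt _ hn), step x hx]
  have hfin : ((i : ℕ) % e + (i / e) * e) = (i : ℕ) := Nat.mod_add_div' _ _
  have := main ((i : ℕ) / e) ((i : ℕ) % e)
    (lt_of_lt_of_le (Nat.mod_lt _ hepos) (Nat.le_of_dvd hn he))
  rw [hfin] at this
  have hi : v i = v ⟨(i : ℕ) % n, Nat.mod_lt _ hn⟩ := by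
    congr 1
    exact Fin.ext (Nat.mod_eq_of_lt i.isLt).symm
  rw [hi, this]

lemma card_fixSet (hn : 0 < n) (t : ZMod q) {e : ℕ} (hepos : 0 < e) (he : e ∣ n) :
    (fixSet n q t e).card =
      (Finset.univ.filter (fun u : Fin e → ZMod q => (n / e) • (∑ j, u j) = t)).card := by
  apply Finset.card_bij' (fun v _ => fun j : Fin e => v ⟨(j : ℕ), lt_of_lt_of_le j.isLt (Nat.le_of_dvd hn he)⟩)
    (fun u _ => expand n hepos u)
  · -- maps into target
    intro v hv
    obtain ⟨hv1, hv2⟩ := Finset.mem_filter.mp hv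
    rw [Finset.mem_filter]
    refine ⟨Finset.mem_univ _, ?_⟩
    have hexp : expand n hepos (fun j : Fin e => v ⟨(j : ℕ), lt_of_lt_of_le j.isLt (Nat.le_of_dvd hn he)⟩) = v := by
      funext i
      unfold expand
      exact (fixed_eq_expand hn hepos he hv2 i).symm
    have := sum_expand hn hepos he (fun j : Fin e => v ⟨(j : ℕ), lt_of_lt_of_le j.isLt (Nat.le_of_dvd hn he)⟩)
    rw [hexp] at this
    rw [← this]
    exact mem_traceSet_iff.mp hv1
  · -- maps back into source
    intro u hu
    rw [Finset.mem_filter] at hu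
    unfold fixSet
    rw [Finset.mem_filter]
    refine ⟨mem_traceSet_iff.mpr ?_, expand_fixed hn hepos he u⟩
    rw [sum_expand hn hepos he u]
    exact hu.2
  · -- left inverse
    intro v hv
    obtain ⟨-, hv2⟩ := Finset.mem_filter.mp hv
    funext i
    unfold expand
    exact (fixed_eq_expand hn hepos he hv2 i).symm
  · -- right inverse
    intro u hu
    funext j
    unfold expand
    congr 1
    exact Fin.ext (by simp [Nat.mod_eq_of_lt j.isLt])

end fixed

section zmodcount

lemma card_sum_fiber {q : ℕ} [NeZero q] {e : ℕ} (hepos : 0 < e) (x : ZMod q) :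
    (Finset.univ.filter (fun u : Fin e → ZMod q => ∑ j, u j = x)).card = q ^ (e - 1) := by
  obtain ⟨e', rfl⟩ : ∃ e', e = e' + 1 := ⟨e - 1, by omega⟩
  have h0 : q ^ (e' + 1 - 1) = Fintype.card (Fin e' → ZMod q) := by
    simp [ZMod.card]
  rw [h0, ← Finset.card_univ]
  apply Finset.card_bij' (fun (u : Fin (e'+1) → ZMod q) (_ : u ∈ Finset.univ.filter (fun u : Fin (e'+1) → ZMod q => ∑ j, u j = x)) => Fin.init u)
    (fun (w : Fin e' → ZMod q) (_ : w ∈ (Finset.univ : Finset (Fin e' → ZMod q))) => Fin.snoc w (x - ∑ j, w j))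
  · intro u hu
    exact Finset.mem_univ _
  · intro w hw
    rw [Finset.mem_filter]
    refine ⟨Finset.mem_univ _, ?_⟩
    simp [Fin.sum_univ_castSucc]
  · intro u hu
    have hsum := (Finset.mem_filter.mp hu).2
    rw [Fin.sum_univ_castSucc] at hsum
    have hlast : u (Fin.last e') = x - ∑ j : Fin e', Fin.init u j := by
      rw [← hsum]
      simp [Fin.init]
    conv_rhs => rw [← Fin.snoc_init_self u]
    rw [hlast]
  · intro w hw
    simp [Fin.init_snoc]

lemma card_kernel {q : ℕ} [NeZero q] (m : ℕ) :
    (Finset.univ.filter (fun y : ZMod q => (m : ZMod q) * y = 0)).card = Nat.gcd m q := by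
  have hq : 0 < q := Nat.pos_of_ne_zero (NeZero.ne q)
  set g := Nat.gcd m q with hg
  have hgpos : 0 < g := Nat.gcd_pos_of_pos_right m hq
  have hgq : g ∣ q := Nat.gcd_dvd_right m q
  have hgm : g ∣ m := Nat.gcd_dvd_left m q
  have hcpos : 0 < q / g := Nat.div_pos (Nat.le_of_dvd hq hgq) hgpos
  have hqeq : g * (q / g) = q := Nat.mul_div_cancel' hgq
  rw [← Finset.card_range g]
  symm
  apply Finset.card_bij' (fun (j : ℕ) (_ : j ∈ Finset.range g) => ((j * (q / g) : ℕ) : ZMod q))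
    (fun (y : ZMod q) (_ : y ∈ Finset.univ.filter (fun y : ZMod q => (m : ZMod q) * y = 0)) =>
      y.val / (q / g))
  · intro j _
    rw [Finset.mem_filter]
    refine ⟨Finset.mem_univ _, ?_⟩
    rw [← Nat.cast_mul, ZMod.natCast_eq_zero_iff]
    obtain ⟨m', hm'⟩ := hgm
    refine ⟨m' * j, ?_⟩
    rw [hm']
    calc g * m' * (j * (q / g)) = (g * (q / g)) * (m' * j) := by ring
    _ = q * (m' * j) := by rw [hqeq]
  · intro y _
    rw [Finset.mem_range, Nat.div_lt_iff_lt_mul hcpos]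
    calc y.val < q := y.val_lt
    _ = g * (q / g) := hqeq.symm
  · intro j hj
    rw [Finset.mem_range] at hj
    have hlt : j * (q / g) < q := by
      calc j * (q / g) < g * (q / g) := Nat.mul_lt_mul_of_lt_of_le hj (le_refl _) hcpos
      _ = q := hqeq
    rw [ZMod.val_natCast, Nat.mod_eq_of_lt hlt, Nat.mul_div_cancel _ hcpos]
  · intro y hy
    have hker := (Finset.mem_filter.mp hy).2
    rw [show (m : ZMod q) * y = ((m * y.val : ℕ) : ZMod q) by
        rw [Nat.cast_mul, ZMod.natCast_rightInverse y],
      ZMod.natCast_eq_zero_iff] at hker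
    have hdvd : (q / g) ∣ y.val := by
      obtain ⟨c, hc⟩ := hker
      obtain ⟨m', hm'⟩ := hgm
      obtain ⟨q', hq'⟩ := hgq
      have hq'' : q / g = q' := by rw [hq', Nat.mul_div_cancel_left _ hgpos]
      rw [hq'']
      have heq : m' * y.val = q' * c := by
        apply Nat.eq_of_mul_eq_mul_left hgpos
        calc g * (m' * y.val) = g * m' * y.val := by ring
        _ = m * y.val := by rw [← hm']
        _ = q * c := hc
        _ = g * (q' * c) := by rw [hq']; ring
      have hco : Nat.Coprime q' m' := by
        have := Nat.coprime_div_gcd_div_gcd (m := m) (n := q) hgpos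
        rw [← hg, hm', hq', Nat.mul_div_cancel_left _ hgpos,
          Nat.mul_div_cancel_left _ hgpos] at this
        exact this.symm
      exact hco.dvd_of_dvd_mul_left ⟨c, heq⟩
    obtain ⟨j, hj⟩ := hdvd
    rw [hj, Nat.mul_div_cancel_left _ hcpos, Nat.mul_comm j (q/g), ← hj,
      ZMod.natCast_rightInverse y]

lemma card_solutions {q : ℕ} [NeZero q] (m : ℕ) (t : ZMod q) :
    (Finset.univ.filter (fun y : ZMod q => (m : ZMod q) * y = t)).card =
      if Nat.gcd m q ∣ t.val then Nat.gcd m q else 0 := by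
  set g := Nat.gcd m q with hg
  have hgq : g ∣ q := Nat.gcd_dvd_right m q
  have hgm : g ∣ m := Nat.gcd_dvd_left m q
  haveI : NeZero g := ⟨by
    have hq : 0 < q := Nat.pos_of_ne_zero (NeZero.ne q)
    have := Nat.gcd_pos_of_pos_right m hq
    omega⟩
  by_cases hdvd : g ∣ t.val
  · rw [if_pos hdvd]
    -- find a particular solution x0
    have hbezout : (g : ZMod q) = (m : ZMod q) * ((Nat.gcdA m q : ℤ) : ZMod q) := by
      have h1 : ((g : ℤ) : ZMod q) = ((m * Nat.gcdA m q + q * Nat.gcdB m q : ℤ) : ZMod q) := by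
        rw [← Nat.gcd_eq_gcd_ab]
      push_cast at h1
      rw [ZMod.natCast_self] at h1
      push_cast
      rw [h1]
      ring
    obtain ⟨c, hc⟩ := hdvd
    have hx0 : (m : ZMod q) * (((Nat.gcdA m q : ℤ) : ZMod q) * (c : ℕ)) = t := by
      rw [← mul_assoc, ← hbezout, ← Nat.cast_mul, ← hc, ZMod.natCast_rightInverse t]
    set x0 := ((Nat.gcdA m q : ℤ) : ZMod q) * (c : ℕ) with hx0def
    rw [hg, ← card_kernel (q := q) m]
    apply Finset.card_bij' (fun (y : ZMod q) (_ : y ∈ Finset.univ.filter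
        (fun y : ZMod q => (m : ZMod q) * y = t)) => y - x0)
      (fun (y : ZMod q) (_ : y ∈ Finset.univ.filter
        (fun y : ZMod q => (m : ZMod q) * y = 0)) => y + x0)
    · intro y hy
      have h := (Finset.mem_filter.mp hy).2
      rw [Finset.mem_filter]
      refine ⟨Finset.mem_univ _, ?_⟩
      rw [mul_sub, h, hx0, sub_self]
    · intro y hy
      have h := (Finset.mem_filter.mp hy).2
      rw [Finset.mem_filter]
      refine ⟨Finset.mem_univ _, ?_⟩
      rw [mul_add, h, hx0, zero_add]
    · intro y _; ring
    · intro y _; ring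
  · rw [if_neg hdvd, Finset.card_eq_zero]
    rw [Finset.filter_eq_empty_iff]
    intro y _
    intro hy
    apply hdvd
    have hcast := congrArg (ZMod.castHom hgq (ZMod g)) hy
    rw [map_mul, map_natCast] at hcast
    rw [show ((m : ℕ) : ZMod g) = 0 from (ZMod.natCast_eq_zero_iff m g).mpr hgm,
      zero_mul] at hcast
    rw [← ZMod.natCast_eq_zero_iff]
    calc ((t.val : ℕ) : ZMod g) = (ZMod.castHom hgq (ZMod g)) t := by
          rw [ZMod.castHom_apply, ZMod.natCast_val]
    _ = 0 := hcast.symm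

open scoped Classical in
lemma card_smul_sum {q : ℕ} [NeZero q] {e : ℕ} (hepos : 0 < e) (m : ℕ) (t : ZMod q) :
    (Finset.univ.filter (fun u : Fin e → ZMod q => m • (∑ j, u j) = t)).card =
      if Nat.gcd m q ∣ t.val then Nat.gcd m q * q ^ (e - 1) else 0 := by
  have hsmul : ∀ s : ZMod q, m • s = (m : ZMod q) * s := fun s => by rw [nsmul_eq_mul]
  rw [Finset.card_eq_sum_card_fiberwise (f := fun u : Fin e → ZMod q => ∑ j, u j)
    (t := Finset.univ.filter (fun y : ZMod q => (m : ZMod q) * y = t)) ?_]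
  · rw [Finset.sum_congr rfl (g := fun _ => q ^ (e-1)) ?_, Finset.sum_const, smul_eq_mul,
      card_solutions m t]
    · split <;> simp
    · intro y hy
      have hy2 := (Finset.mem_filter.mp hy).2
      have heq : (Finset.univ.filter (fun u : Fin e → ZMod q => m • (∑ j, u j) = t)).filter
          (fun u : Fin e → ZMod q => ∑ j, u j = y) =
          Finset.univ.filter (fun u : Fin e → ZMod q => ∑ j, u j = y) := by
        rw [Finset.filter_filter]
        apply Finset.filter_congr
        intro u _
        constructor
        · rintro ⟨-, h⟩; exact h
        · intro h
          exact ⟨by rw [h, hsmul, hy2], h⟩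
      rw [heq, card_sum_fiber hepos y]
  · intro u hu
    have := (Finset.mem_filter.mp hu).2
    rw [Finset.mem_coe, Finset.mem_filter]
    exact ⟨Finset.mem_univ _, by rw [← hsmul, this]⟩

end zmodcount

section assembly
open scoped Classical
variable {n q : ℕ} [NeZero q]

lemma card_fixSet_formula (hn : 0 < n) (t : ZMod q) {e : ℕ} (hepos : 0 < e) (he : e ∣ n) :
    (fixSet n q t e).card =
      if Nat.gcd (n / e) q ∣ t.val then Nat.gcd (n / e) q * q ^ (e - 1) else 0 := by
  rw [card_fixSet hn t hepos he, card_smul_sum hepos (n / e) t]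

lemma card_perSet_moebius (hn : 0 < n) (t : ZMod q) :
    ((perSet n q t n).card : ℤ) =
      ∑ d ∈ n.divisors,
        (ArithmeticFunction.moebius d) * ((fixSet n q t (n / d)).card : ℤ) := by
  have key := (ArithmeticFunction.sum_eq_iff_sum_smul_moebius_eq_on
    (f := fun d => ((perSet n q t d).card : ℤ))
    (g := fun e => ((fixSet n q t e).card : ℤ))
    {m | m ∣ n} (fun a b hab hb => hab.trans hb)).mp ?_ n hn (dvd_refl n)
  · rw [← key, Nat.sum_divisorsAntidiagonal
      (f := fun a b => (ArithmeticFunction.moebius a) • ((fixSet n q t b).card : ℤ))]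
    apply Finset.sum_congr rfl
    intro d _
    rw [smul_eq_mul]
  · intro e hepos hedvd
    rw [← Nat.cast_sum]
    exact_mod_cast congrArg (Nat.cast : ℕ → ℤ) (card_fixSet_eq_sum t hepos).symm

end assembly


/-- For `n ≥ 1`, `q ≥ 1` and `t : ZMod q`, as integers,
`q * n * L_q(n,t) = ∑ gcd(d,q) * μ(d) * q^(n/d)`, the sum over positive divisors `d`
of `n` with `gcd(d,q)` dividing the canonical representative of `t` in `{0,…,q-1}`. -/
theorem lyndonCount_formula (n q : ℕ) [NeZero q] (hn : 1 ≤ n) (hq : 1 ≤ q) (t : ZMod q) :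
    (q : ℤ) * (n : ℤ) * (lyndonCount q n t : ℤ) =
      ∑ d ∈ n.divisors.filter (fun d => Nat.gcd d q ∣ t.val),
        (Nat.gcd d q : ℤ) * (ArithmeticFunction.moebius d) * (q : ℤ) ^ (n / d) := by
  classical
  have hn0 : 0 < n := hn
  have h1 : ((n : ℤ)) * (lyndonCount q n t : ℤ) = ((perSet n q t n).card : ℤ) := by
    rw [lyndonCount_eq hn0 t]
    have := card_perSet_top (q := q) hn0 t
    rw [this]
    push_cast
    ring
  rw [mul_assoc, h1, card_perSet_moebius hn0 t, Finset.mul_sum, Finset.sum_filter]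
  apply Finset.sum_congr rfl
  intro d hd
  obtain ⟨hdvd, hne⟩ := Nat.mem_divisors.mp hd
  have hdpos : 0 < d := Nat.pos_of_dvd_of_pos hdvd hn0
  have hepos : 0 < n / d := Nat.div_pos (Nat.le_of_dvd hn0 hdvd) hdpos
  have hfix := card_fixSet_formula hn0 t hepos (Nat.div_dvd_of_dvd hdvd)
  rw [Nat.div_div_self hdvd (by omega)] at hfix
  rw [hfix]
  split_ifs with hP
  · push_cast
    have hq' : (q : ℤ) * (q : ℤ) ^ (n / d - 1) = (q : ℤ) ^ (n / d) := by
      conv_rhs => rw [show n / d = (n / d - 1) + 1 by omega]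
      rw [pow_succ]
      ring
    rw [← hq']
    ring
  · simp
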